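/- Let E be a real Banach space, T : E → E a map, and h ∈ E with Th = h. Suppose (i) there exist constants K ≥ 0 and β ∈ (0,1) such that ‖Tψ₁ − Tψ₂‖ ≤ K‖ψ₁ − ψ₂‖^β for all ψ₁, ψ₂ ∈ E, and (ii) T is Fréchet differentiable at h with derivative D_h satisfying limₙ ‖D_hⁿ‖^{1/n} < 1. Then there exists ε > 0 such that h is the unique fixed point of T in the ball {ψ ∈ E : ‖ψ − h‖ < ε}: any h' with Th' = h' and ‖h' − h‖ < ε satisfies h' = h. (Corollary 3 of the paper: local identification of the fixed point of the nonlinear Perron-Frobenius operator.) -/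

import Mathlib

open Filter

lemma iter_deriv {E : Type*} [NormedAddCommGroup E] [NormedSpace ℝ E]
    (T : E → E) (h : E) (hfix : T h = h) (Dh : E →L[ℝ] E) (hdiff : HasFDerivAt T Dh h) :
    ∀ n : ℕ, HasFDerivAt (T^[n]) (Dh ^ n) h := by
  intro n
  induction n with
  | zero => simp only [Function.iterate_zero, pow_zero]; exact hasFDerivAt_id h
  | succ n ih =>
      rw [Function.iterate_succ, pow_succ]
      have : HasFDerivAt (T^[n]) (Dh ^ n) (T h) := by rw [hfix]; exact ih
      exact this.comp h hdiff

/-- **Corollary 3.** Let `E` be a real Banach space, `T : E → E` with `Th = h`.  If (i)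
`‖Tψ₁ − Tψ₂‖ ≤ K‖ψ₁ − ψ₂‖^β` for all `ψ₁, ψ₂` with `K ≥ 0`, `β ∈ (0,1)`, and (ii) `T` is
Fréchet differentiable at `h` with `limₙ ‖D_hⁿ‖^{1/n} < 1`, then `h` is the unique fixed
point of `T` in some ball `{ψ : ‖ψ − h‖ < ε}`. -/
theorem stmt_9 {E : Type*} [NormedAddCommGroup E] [NormedSpace ℝ E] [CompleteSpace E]
    (T : E → E) (h : E) (hfix : T h = h)
    (K β : ℝ) (hK : 0 ≤ K) (hβ0 : 0 < β) (hβ1 : β < 1)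
    (hHolder : ∀ ψ₁ ψ₂ : E, ‖T ψ₁ - T ψ₂‖ ≤ K * ‖ψ₁ - ψ₂‖ ^ β)
    (Dh : E →L[ℝ] E) (hdiff : HasFDerivAt T Dh h)
    (hr : ∃ r : ℝ, r < 1 ∧
      Tendsto (fun n : ℕ => ‖Dh ^ n‖ ^ (1 / (n : ℝ))) atTop (nhds r)) :
    ∃ ε : ℝ, 0 < ε ∧ ∀ h' : E, T h' = h' → ‖h' - h‖ < ε → h' = h := by
  obtain ⟨r, hr1, htend⟩ := hr
  set c : ℝ := (r + 1) / 2 with hc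
  have hrc : r < c := by rw [hc]; linarith
  have hc1 : c < 1 := by rw [hc]; linarith
  have hev : ∀ᶠ n : ℕ in atTop, ‖Dh ^ n‖ ^ (1 / (n : ℝ)) < c :=
    htend.eventually (Filter.Tendsto.eventually_lt_const hrc tendsto_id)
  obtain ⟨n, hn, hn1⟩ := (hev.and (eventually_ge_atTop 1)).exists
  have hn0 : (n : ℝ) ≠ 0 := by positivity
  have hnne : n ≠ 0 := by omega
  have hnorm : ‖Dh ^ n‖ = (‖Dh ^ n‖ ^ (1 / (n : ℝ))) ^ n := by
    rw [← Real.rpow_natCast (‖Dh ^ n‖ ^ (1 / (n : ℝ))) n, ← Real.rpow_mul (norm_nonneg _),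
      one_div_mul_cancel hn0, Real.rpow_one]
  set q : ℝ := ‖Dh ^ n‖ with hq
  have hq0 : 0 ≤ q := norm_nonneg _
  have hq1 : q < 1 := by
    calc q = (‖Dh ^ n‖ ^ (1 / (n : ℝ))) ^ n := hnorm
    _ < c ^ n := by
        apply pow_lt_pow_left₀ hn _ hnne
        positivity
    _ < 1 := by
        apply pow_lt_one₀ _ hc1 hnne
        have : (0:ℝ) ≤ ‖Dh ^ n‖ ^ (1 / (n : ℝ)) := by positivity
        linarith
  -- little-o from derivative of the iterate
  have hSder := iter_deriv T h hfix Dh hdiff n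
  have hδ : (0:ℝ) < (1 - q) / 2 := by linarith
  have hlo := hSder.isLittleO.def hδ
  rw [Metric.eventually_nhds_iff] at hlo
  obtain ⟨ε, hε, hball⟩ := hlo
  refine ⟨ε, hε, fun h' hfix' hlt => ?_⟩
  have hd : dist h' h < ε := by rwa [dist_eq_norm]
  have hb := hball hd
  simp only [Function.iterate_fixed hfix' n, Function.iterate_fixed hfix n] at hb
  have hDh : ‖(Dh ^ n) (h' - h)‖ ≤ q * ‖h' - h‖ := (Dh ^ n).le_opNorm _
  have key : ‖h' - h‖ ≤ (1 - q) / 2 * ‖h' - h‖ + q * ‖h' - h‖ := by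
    calc ‖h' - h‖ = ‖(h' - h - (Dh ^ n) (h' - h)) + (Dh ^ n) (h' - h)‖ := by abel_nf
    _ ≤ ‖h' - h - (Dh ^ n) (h' - h)‖ + ‖(Dh ^ n) (h' - h)‖ := norm_add_le _ _
    _ ≤ (1 - q) / 2 * ‖h' - h‖ + q * ‖h' - h‖ := add_le_add hb hDh
  have : ‖h' - h‖ ≤ 0 := by nlinarith [norm_nonneg (h' - h)]
  have := le_antisymm this (norm_nonneg _)
  rwa [norm_eq_zero, sub_eq_zero] at this
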